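/- The operators X', Y', Z' do not satisfy the Pauli anti-commutation relations: there exist distinct P', Q' ∈ {X', Y', Z'} with P'Q' + Q'P' ≠ 0. -/

import Mathlib

open Matrix Kronecker

noncomputable def PX : Matrix (Fin 2) (Fin 2) ℂ := !![0, 1; 1, 0]
noncomputable def PY : Matrix (Fin 2) (Fin 2) ℂ := !![0, -Complex.I; Complex.I, 0]
noncomputable def PZ : Matrix (Fin 2) (Fin 2) ℂ := !![1, 0; 0, -1]
noncomputable def I2 : Matrix (Fin 2) (Fin 2) ℂ := 1

noncomputable def sgn (b : Bool) : ℂ := if b then -1 else 1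

noncomputable def Xp : Matrix (Fin 2 × Fin 2) (Fin 2 × Fin 2) ℂ :=
  ((1 : ℂ)/(Real.sqrt 6 : ℂ)) •
    (((1 : ℂ)/2) • (PX ⊗ₖ PX) + ((1 : ℂ)/2) • (PX ⊗ₖ PZ) + PZ ⊗ₖ I2)
noncomputable def Yp : Matrix (Fin 2 × Fin 2) (Fin 2 × Fin 2) ℂ :=
  ((1 : ℂ)/(Real.sqrt 6 : ℂ)) •
    (((1 : ℂ)/2) • (I2 ⊗ₖ PX) + I2 ⊗ₖ PZ + ((1 : ℂ)/2) • (PY ⊗ₖ PY))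
noncomputable def Zp : Matrix (Fin 2 × Fin 2) (Fin 2 × Fin 2) ℂ :=
  ((1 : ℂ)/(Real.sqrt 6 : ℂ)) •
    (PZ ⊗ₖ PZ - ((1 : ℂ)/2) • (PX ⊗ₖ I2) - ((1 : ℂ)/2) • (PZ ⊗ₖ PX))
theorem primed_no_anticommutation :
    ∃ P Q, P ∈ ({Xp, Yp, Zp} : Set (Matrix (Fin 2 × Fin 2) (Fin 2 × Fin 2) ℂ)) ∧
      Q ∈ ({Xp, Yp, Zp} : Set (Matrix (Fin 2 × Fin 2) (Fin 2 × Fin 2) ℂ)) ∧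
      P ≠ Q ∧ P * Q + Q * P ≠ 0 := by
  have h6 : ((Real.sqrt 6 : ℝ) : ℂ) * ((Real.sqrt 6 : ℝ) : ℂ) = 6 := by
    rw [← Complex.ofReal_mul, Real.mul_self_sqrt (by norm_num)]; norm_num
  have s6 : ((Real.sqrt 6 : ℝ) : ℂ) ≠ 0 := by
    intro h; rw [h] at h6; simp at h6
  refine ⟨Xp, Yp, by simp, by simp, ?_, ?_⟩
  · intro h
    have := congrFun (congrFun h (0,0)) (0,1)
    simp [Xp, Yp, PX, PY, PZ, I2, Matrix.smul_apply, Matrix.add_apply,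
      Matrix.kroneckerMap_apply, Matrix.one_apply] at this
  · intro h
    have := congrFun (congrFun h (0,0)) (0,0)
    simp [Xp, Yp, PX, PY, PZ, I2, Matrix.mul_apply, Fintype.sum_prod_type,
      Fin.sum_univ_two, Matrix.smul_apply, Matrix.add_apply,
      Matrix.kroneckerMap_apply, Matrix.one_apply] at this
    field_simp at this
    norm_num at this
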